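/- Let P, Q be real (N+1)×(N+1) matrices, P diagonal positive definite, Q + Qᵀ = −e₀e₀ᵀ + e_Ne_Nᵀ; let A be a diagonal positive definite matrix. Define the weighted norm ‖v‖²_ξ = vᵀA⁻¹Pv. Then for any solution of v'(t) = −A P⁻¹Q v(t) − ½[A₁₁P⁻¹]₀ v₀(t) e₀ (SAT for homogeneous left boundary data), one has d/dt ‖v(t)‖²_ξ = −v_N(t)². -/

import Mathlib

open Matrix

theorem stmt_12 {N : ℕ} (P Q A : Matrix (Fin (N + 1)) (Fin (N + 1)) ℝ)
    (hPdiag : ∃ d : Fin (N + 1) → ℝ, P = Matrix.diagonal d) (hP : P.PosDef)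
    (hQ : Q + Qᵀ = -Matrix.vecMulVec (Pi.single 0 1) (Pi.single 0 1) +
      Matrix.vecMulVec (Pi.single (Fin.last N) 1) (Pi.single (Fin.last N) 1))
    (hAdiag : ∃ d : Fin (N + 1) → ℝ, A = Matrix.diagonal d) (hA : A.PosDef)
    (v : ℝ → Fin (N + 1) → ℝ)
    (hv : ∀ t, HasDerivAt v
      (-((A * P⁻¹ * Q).mulVec (v t)) -
        (1 / 2 * (A * P⁻¹) 0 0 * v t 0) • (Pi.single 0 1 : Fin (N + 1) → ℝ)) t)
    (t : ℝ) :
    HasDerivAt (fun s => v s ⬝ᵥ (A⁻¹ * P).mulVec (v s)) (-(v t (Fin.last N) ^ 2)) t := by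
  obtain ⟨d, rfl⟩ := hPdiag
  obtain ⟨e, rfl⟩ := hAdiag
  have hd : ∀ i, 0 < d i := Matrix.posDef_diagonal_iff.mp hP
  have he : ∀ i, 0 < e i := Matrix.posDef_diagonal_iff.mp hA
  have hd0 : ∀ i, d i ≠ 0 := fun i => (hd i).ne'
  have he0 : ∀ i, e i ≠ 0 := fun i => (he i).ne'
  have hdinv : (Matrix.diagonal d)⁻¹ = Matrix.diagonal (fun i => (d i)⁻¹) :=
    Matrix.inv_eq_right_inv (by
      rw [Matrix.diagonal_mul_diagonal,
        show (fun i => d i * (d i)⁻¹) = (fun _ => (1:ℝ)) from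
          funext fun i => mul_inv_cancel₀ (hd0 i), Matrix.diagonal_one])
  have heinv : (Matrix.diagonal e)⁻¹ = Matrix.diagonal (fun i => (e i)⁻¹) :=
    Matrix.inv_eq_right_inv (by
      rw [Matrix.diagonal_mul_diagonal,
        show (fun i => e i * (e i)⁻¹) = (fun _ => (1:ℝ)) from
          funext fun i => mul_inv_cancel₀ (he0 i), Matrix.diagonal_one])
  set m : Fin (N + 1) → ℝ := fun i => (e i)⁻¹ * d i with hm
  set g : Fin (N + 1) → ℝ := fun i => e i * (d i)⁻¹ with hg
  have hM : (Matrix.diagonal e)⁻¹ * Matrix.diagonal d = Matrix.diagonal m := by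
    rw [heinv, Matrix.diagonal_mul_diagonal]
  have hG : Matrix.diagonal e * (Matrix.diagonal d)⁻¹ = Matrix.diagonal g := by
    rw [hdinv, Matrix.diagonal_mul_diagonal]
  set w : Fin (N + 1) → ℝ :=
    -((Matrix.diagonal e * (Matrix.diagonal d)⁻¹ * Q).mulVec (v t)) -
      (1 / 2 * (Matrix.diagonal e * (Matrix.diagonal d)⁻¹) 0 0 * v t 0) •
        (Pi.single 0 1 : Fin (N + 1) → ℝ) with hw
  have hvi : ∀ i, HasDerivAt (fun s => v s i) (w i) t := hasDerivAt_pi.mp (hv t)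
  have hterm : ∀ i, HasDerivAt (fun s => v s i * (m i * v s i))
      (w i * (m i * v t i) + v t i * (m i * w i)) t :=
    fun i => (hvi i).mul ((hvi i).const_mul (m i))
  have hsum : HasDerivAt (fun s => ∑ i, v s i * (m i * v s i))
      (∑ i, (w i * (m i * v t i) + v t i * (m i * w i))) t :=
    HasDerivAt.fun_sum (fun i _ => hterm i)
  have hfun : (fun s => v s ⬝ᵥ ((Matrix.diagonal e)⁻¹ * Matrix.diagonal d).mulVec (v s)) =
      fun s => ∑ i, v s i * (m i * v s i) := by
    funext s
    simp [hM, dotProduct, Matrix.mulVec_diagonal]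
  -- key pointwise identity
  have key : ∀ i, m i * w i = -(Q.mulVec (v t)) i - (Pi.single 0 (v t 0 / 2) : Fin (N+1) → ℝ) i := by
    intro i
    have h1 : ((Matrix.diagonal e * (Matrix.diagonal d)⁻¹ * Q).mulVec (v t)) i
        = g i * (Q.mulVec (v t)) i := by
      rw [hG, ← Matrix.mulVec_mulVec, Matrix.mulVec_diagonal]
    have h2 : (Matrix.diagonal e * (Matrix.diagonal d)⁻¹) 0 0 = g 0 := by
      rw [hG, Matrix.diagonal_apply_eq]
    simp only [hw, Pi.sub_apply, Pi.neg_apply, Pi.smul_apply, smul_eq_mul, h1, h2,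
      Pi.single_apply]
    rcases eq_or_ne i 0 with rfl | hi
    · simp only [if_pos rfl]
      have hmg : m 0 * g 0 = 1 := by
        rw [show m 0 * g 0 = (e 0)⁻¹ * e 0 * (d 0 * (d 0)⁻¹) by simp only [hm, hg]; ring,
          inv_mul_cancel₀ (he0 0), mul_inv_cancel₀ (hd0 0), one_mul]
      rw [if_pos trivial, if_pos trivial]
      linear_combination (-(Q *ᵥ v t) 0 - v t 0 / 2) * hmg
    · simp only [if_neg hi, mul_zero, sub_zero]
      have hmg : m i * g i = 1 := by
        rw [show m i * g i = (e i)⁻¹ * e i * (d i * (d i)⁻¹) by simp only [hm, hg]; ring,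
          inv_mul_cancel₀ (he0 i), mul_inv_cancel₀ (hd0 i), one_mul]
      linear_combination (-(Q *ᵥ v t) i) * hmg
  have hQform : v t ⬝ᵥ (Q + Qᵀ).mulVec (v t) = 2 * (v t ⬝ᵥ Q.mulVec (v t)) := by
    rw [Matrix.add_mulVec, dotProduct_add]
    have : v t ⬝ᵥ Qᵀ.mulVec (v t) = v t ⬝ᵥ Q.mulVec (v t) := by
      rw [Matrix.dotProduct_mulVec, Matrix.vecMul_transpose, dotProduct_comm]
    rw [this]; ring
  have hsingle : ∀ (j : Fin (N + 1)) (x : Fin (N + 1) → ℝ),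
      x ⬝ᵥ (Matrix.vecMulVec (Pi.single j 1) (Pi.single j 1)).mulVec x = x j ^ 2 := by
    intro j x
    simp [Matrix.mulVec, dotProduct, Matrix.vecMulVec_apply, Pi.single_apply,
      Finset.mul_sum, mul_ite, ite_mul]
    ring
  have hQv : 2 * (v t ⬝ᵥ Q.mulVec (v t)) = v t (Fin.last N) ^ 2 - v t 0 ^ 2 := by
    rw [← hQform, hQ, Matrix.add_mulVec, dotProduct_add, Matrix.neg_mulVec,
      dotProduct_neg, hsingle, hsingle]
    ring
  have hD : (∑ i, (w i * (m i * v t i) + v t i * (m i * w i)))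
      = -(v t (Fin.last N) ^ 2) := by
    have : ∀ i, w i * (m i * v t i) + v t i * (m i * w i) = 2 * (v t i * (m i * w i)) := by
      intro i; ring
    simp_rw [this, key]
    have hsplit : ∑ i, 2 * (v t i * (-(Q.mulVec (v t)) i - (Pi.single 0 (v t 0 / 2) : Fin (N+1) → ℝ) i))
        = -2 * (v t ⬝ᵥ Q.mulVec (v t)) - 2 * (v t ⬝ᵥ (Pi.single 0 (v t 0 / 2) : Fin (N+1) → ℝ)) := by
      simp only [dotProduct, Finset.mul_sum, ← Finset.sum_sub_distrib]
      congr 1; funext i; ring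
    rw [hsplit, dotProduct_single]
    nlinarith [hQv]
  rw [hfun]
  rw [← hD]
  exact hsum
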